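/- Let n ∈ ℕ with n ≥ 1 and let W, W' be subsets of Fin n with #W ≤ #W'. Then the number of permutations σ of Fin n whose cycle structure is a single n-cycle (i.e., σ is a cycle whose support is all of Fin n) and which satisfy σ(W) ⊆ W', multiplied by C(n,#W), is at most n!·C(#W',#W). Equivalently, for σ a uniformly random full n-cycle, the probability that σ(W) ⊆ W' is at most n·C(#W',#W)/C(n,#W), i.e., at most n times the corresponding probability for a uniformly random permutation. -/

import Mathlib

open Equiv

lemma exists_perm_extend {α : Type*} [Fintype α] [DecidableEq α] {p : α → Prop}
    [DecidablePred p] (e : {x // p x} ↪ α) :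
    ∃ π : Equiv.Perm α, ∀ x : {x // p x}, π x = e x := by
  classical
  let E : {x // p x} ≃ Set.range e := Equiv.ofInjective e e.injective
  refine ⟨E.extendSubtype, fun x => ?_⟩
  rw [E.extendSubtype_apply_of_mem x x.2]
  rfl

theorem count_full_cycles_mapping_into
    (n : ℕ) (hn : 1 ≤ n) (W W' : Finset (Fin n)) (h : W.card ≤ W'.card) :
    Nat.card {σ : Equiv.Perm (Fin n) //
        (σ.IsCycle ∧ σ.support = Finset.univ) ∧ W.image σ ⊆ W'} * n.choose W.card ≤
      n.factorial * W'.card.choose W.card := by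
  classical
  set k := W.card with hk
  have hkn : k ≤ n := by
    simpa using W.card_le_card (Finset.subset_univ W) |>.trans_eq (by simp)
  -- step 1 : drop the cycle condition
  have h1 : Nat.card {σ : Equiv.Perm (Fin n) //
      (σ.IsCycle ∧ σ.support = Finset.univ) ∧ W.image σ ⊆ W'} ≤
      Fintype.card {σ : Equiv.Perm (Fin n) // W.image ⇑σ ⊆ W'} := by
    rw [Nat.card_eq_fintype_card]
    exact Fintype.card_le_of_injective (fun σ => ⟨σ.1, σ.2.2⟩)
      (fun a b hab => by simp only [Subtype.mk.injEq] at hab; exact Subtype.ext hab)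
  -- the first-component embedding
  have he1 : ∀ σ : {σ : Equiv.Perm (Fin n) // W.image ⇑σ ⊆ W'},
      ∀ x : (W : Finset (Fin n)), (σ.1 x : Fin n) ∈ W' :=
    fun σ x => σ.2 (Finset.mem_image_of_mem _ x.2)
  let e1 : {σ : Equiv.Perm (Fin n) // W.image ⇑σ ⊆ W'} → ((W : Finset (Fin n)) ↪ (W' : Finset (Fin n))) :=
    fun σ => ⟨fun x => ⟨σ.1 x, he1 σ x⟩, fun a b hab =>
      Subtype.ext (σ.1.injective (Subtype.ext_iff.mp hab))⟩
  -- extension of an embedding W ↪ Fin n to a permutation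
  let ext : ((W : Finset (Fin n)) ↪ (W' : Finset (Fin n))) → Equiv.Perm (Fin n) :=
    fun e => Classical.choose (exists_perm_extend (e.trans (Function.Embedding.subtype _)))
  have hext : ∀ e, ∀ x : (W : Finset (Fin n)), (ext e) x = (e x : Fin n) :=
    fun e => Classical.choose_spec (exists_perm_extend (e.trans (Function.Embedding.subtype _)))
  -- second component
  have hmem : ∀ σ : {σ : Equiv.Perm (Fin n) // W.image ⇑σ ⊆ W'},
      ∀ v : (Wᶜ : Finset (Fin n)), ((ext (e1 σ))⁻¹ (σ.1 v)) ∈ (Wᶜ : Finset (Fin n)) := by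
    intro σ v
    rw [Finset.mem_compl]
    intro hw
    have h3 : (ext (e1 σ)) ((ext (e1 σ))⁻¹ (σ.1 v)) = σ.1 ((ext (e1 σ))⁻¹ (σ.1 v)) :=
      hext (e1 σ) ⟨_, hw⟩
    have h4 : σ.1 v = σ.1 ((ext (e1 σ))⁻¹ (σ.1 v)) :=
      (Equiv.apply_symm_apply (ext (e1 σ)) (σ.1 v)).symm.trans h3
    have hv := σ.1.injective h4
    have hvc := v.2
    rw [Finset.mem_compl] at hvc
    exact hvc (hv ▸ hw)
  let F : {σ : Equiv.Perm (Fin n) // W.image ⇑σ ⊆ W'} →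
      ((W : Finset (Fin n)) ↪ (W' : Finset (Fin n))) ×
      ((Wᶜ : Finset (Fin n)) ↪ (Wᶜ : Finset (Fin n))) :=
    fun σ => ⟨e1 σ, ⟨fun v => ⟨(ext (e1 σ))⁻¹ (σ.1 v), hmem σ v⟩, fun a b hab =>
      Subtype.ext (σ.1.injective ((ext (e1 σ))⁻¹.injective (Subtype.ext_iff.mp hab)))⟩⟩
  have hF : Function.Injective F := by
    intro σ τ hστ
    have h1' : e1 σ = e1 τ := congrArg Prod.fst hστ
    have h2' := congrArg Prod.snd hστ
    apply Subtype.ext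
    apply Equiv.ext
    intro x
    by_cases hx : x ∈ W
    · have := congrArg (fun e => (e ⟨x, hx⟩ : Fin n)) h1'
      exact this
    · have hx' : x ∈ (Wᶜ : Finset (Fin n)) := Finset.mem_compl.mpr hx
      have := congrArg (fun (e : (Wᶜ : Finset (Fin n)) ↪ (Wᶜ : Finset (Fin n))) =>
        (e ⟨x, hx'⟩ : Fin n)) h2'
      simp only [F, Function.Embedding.coeFn_mk] at this
      have hextEq : ext (e1 σ) = ext (e1 τ) := congrArg ext h1'
      change (ext (e1 σ))⁻¹ (σ.1 x) = (ext (e1 τ))⁻¹ (τ.1 x) at this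
      rw [hextEq] at this
      exact (ext (e1 τ))⁻¹.injective this
  have h2 : Fintype.card {σ : Equiv.Perm (Fin n) // W.image ⇑σ ⊆ W'} ≤
      (W'.card.descFactorial k) * ((n - k).descFactorial (n - k)) := by
    have := Fintype.card_le_of_injective F hF
    rwa [Fintype.card_prod, Fintype.card_embedding_eq, Fintype.card_embedding_eq,
      Fintype.card_coe, Fintype.card_coe, Fintype.card_coe,
      Finset.card_compl, Fintype.card_fin] at this
  calc Nat.card {σ : Equiv.Perm (Fin n) //
        (σ.IsCycle ∧ σ.support = Finset.univ) ∧ W.image σ ⊆ W'} * n.choose k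
      ≤ ((W'.card.descFactorial k) * ((n - k).descFactorial (n - k))) * n.choose k :=
        Nat.mul_le_mul_right _ (h1.trans h2)
    _ = n.factorial * W'.card.choose k := by
        rw [Nat.descFactorial_self, Nat.descFactorial_eq_factorial_mul_choose]
        rw [← Nat.choose_mul_factorial_mul_factorial hkn]
        ring
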